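/- Let X ⊆ ℝ³ be a compact convex body and x ∈ ∂X a point with no line traversing it (i.e., an extreme point of X). Then for every neighborhood U of x, the set of normals G(U ∩ ∂X) contains a spherical cap of positive radius around some direction; in particular, G(U ∩ ∂X) has positive spherical measure. -/

import Mathlib

open RealInnerProductSpace

open Set Finset in
/-- The convex hull of a compact set in `EuclideanSpace ℝ (Fin 3)` is compact. -/
lemma aux_isCompact_convexHull {s : Set (EuclideanSpace ℝ (Fin 3))} (hs : IsCompact s) :
    IsCompact (convexHull ℝ s) := by
  classical
  rcases s.eq_empty_or_nonempty with rfl | ⟨z₀, hz₀⟩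
  · simp
  set f : (Fin 4 → ℝ) × (Fin 4 → EuclideanSpace ℝ (Fin 3)) → EuclideanSpace ℝ (Fin 3) := fun p => ∑ i, p.1 i • p.2 i with hf
  have hfc : Continuous f := by
    apply continuous_finset_sum
    intro i _
    exact ((continuous_apply i).comp continuous_fst).smul
      ((continuous_apply i).comp continuous_snd)
  set T : Set ((Fin 4 → ℝ) × (Fin 4 → EuclideanSpace ℝ (Fin 3))) :=
    (stdSimplex ℝ (Fin 4)) ×ˢ (Set.univ.pi fun _ => s) with hT
  have hTc : IsCompact T := (isCompact_stdSimplex _ _).prod (isCompact_univ_pi fun _ => hs)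
  have himg : f '' T = convexHull ℝ s := by
    apply Set.Subset.antisymm
    · rintro _ ⟨⟨w, z⟩, ⟨⟨hw0, hw1⟩, hz⟩, rfl⟩
      have h1 : Finset.univ.centerMass w z ∈ convexHull ℝ s :=
        Finset.centerMass_mem_convexHull _ (fun i _ => hw0 i) (by rw [hw1]; norm_num)
          (fun i _ => hz i (Set.mem_univ i))
      rwa [Finset.centerMass_eq_of_sum_1 _ _ hw1] at h1
    · intro y hy
      rw [convexHull_eq_union] at hy
      simp only [Set.mem_iUnion] at hy
      obtain ⟨t, hts, hai, hyt⟩ := hy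
      rw [Finset.convexHull_eq, Set.mem_setOf_eq] at hyt
      obtain ⟨w, hw0, hw1, hwy⟩ := hyt
      rw [Finset.centerMass_eq_of_sum_1 _ _ hw1] at hwy
      have hcard : t.card ≤ 4 := by
        have h1 := hai.card_le_finrank_succ
        have h2 : Module.finrank ℝ (vectorSpan ℝ (Set.range ((↑) : t → EuclideanSpace ℝ (Fin 3)))) ≤
            Module.finrank ℝ (EuclideanSpace ℝ (Fin 3)) := Submodule.finrank_le _
        have h3 : Module.finrank ℝ (EuclideanSpace ℝ (Fin 3)) = 3 := finrank_euclideanSpace_fin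
        rw [Fintype.card_coe] at h1
        omega
      set n := t.card with hn
      set e : ↥t ≃ Fin n := t.equivFin with he
      set w' : Fin 4 → ℝ := fun i => if h : (i : ℕ) < n then w (e.symm ⟨i, h⟩) else 0 with hw'
      set z' : Fin 4 → EuclideanSpace ℝ (Fin 3) := fun i => if h : (i : ℕ) < n then (e.symm ⟨i, h⟩ : EuclideanSpace ℝ (Fin 3)) else z₀ with hz'
      have sum4 : ∀ {M : Type} [AddCommMonoid M] (F : ℕ → M),
          (∀ i, n ≤ i → F i = 0) → ∑ i : Fin 4, F i = ∑ a : ↥t, F (e a) := by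
        intro M _ F hF
        rw [Fin.sum_univ_eq_sum_range]
        rw [← Finset.sum_subset (Finset.range_subset_range.2 hcard)
          (fun i _ hi => hF i (by simpa using hi))]
        rw [← Fin.sum_univ_eq_sum_range]
        exact (Equiv.sum_comp e (fun j => F j)).symm
      have hsum1 : ∑ i : Fin 4, w' i = 1 := by
        have := sum4 (fun i => if h : i < n then w (e.symm ⟨i, h⟩) else 0)
          (fun i hi => dif_neg (by omega))
        rw [hw']
        simp only at this ⊢
        rw [this]
        have : ∀ a : ↥t, (if h : ((e a : Fin n) : ℕ) < n then w (e.symm ⟨(e a : Fin n), h⟩) else 0)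
            = w a := by
          intro a
          rw [dif_pos (e a).isLt]
          congr
          simp [Fin.eta]
        rw [Finset.sum_congr rfl (fun a _ => this a)]
        rw [Finset.sum_coe_sort t (fun a => w a)]
        exact hw1
      have hsum2 : ∑ i : Fin 4, w' i • z' i = y := by
        have h0 : ∀ i, n ≤ i → (if h : i < n then w (e.symm ⟨i, h⟩) • ((e.symm ⟨i, h⟩ : ↥t) : EuclideanSpace ℝ (Fin 3))
            else (0 : EuclideanSpace ℝ (Fin 3))) = 0 := fun i hi => dif_neg (by omega)
        have := sum4 (fun i => if h : i < n then w (e.symm ⟨i, h⟩) • ((e.symm ⟨i, h⟩ : ↥t) : EuclideanSpace ℝ (Fin 3))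
          else 0) h0
        have heq : ∀ i : Fin 4, w' i • z' i =
            (fun i => if h : i < n then w (e.symm ⟨i, h⟩) • ((e.symm ⟨i, h⟩ : ↥t) : EuclideanSpace ℝ (Fin 3)) else 0)
              (i : ℕ) := by
          intro i
          by_cases h : (i : ℕ) < n
          · simp only [hw', hz', dif_pos h]
          · simp only [hw', hz', dif_neg h, zero_smul]
        rw [Finset.sum_congr rfl (fun i _ => heq i), this]
        have h2 : ∀ a : ↥t, (if h : ((e a : Fin n) : ℕ) < n then
            w (e.symm ⟨(e a : Fin n), h⟩) • ((e.symm ⟨(e a : Fin n), h⟩ : ↥t) : EuclideanSpace ℝ (Fin 3)) else 0)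
            = w a • (a : EuclideanSpace ℝ (Fin 3)) := by
          intro a
          rw [dif_pos (e a).isLt]
          congr <;> simp [Fin.eta]
        rw [Finset.sum_congr rfl (fun a _ => h2 a)]
        rw [Finset.sum_coe_sort t (fun a => w a • (a : EuclideanSpace ℝ (Fin 3)))]
        convert hwy using 2 <;> rfl
      refine ⟨(w', z'), ⟨⟨fun i => ?_, hsum1⟩, fun i _ => ?_⟩, hsum2⟩
      · by_cases h : (i : ℕ) < n
        · simp only [hw', dif_pos h]; exact hw0 _ (Finset.coe_mem _)
        · simp only [hw', dif_neg h]; exact le_refl 0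
      · by_cases h : (i : ℕ) < n
        · simp only [hz', dif_pos h]; exact hts (Finset.coe_mem _)
        · simp only [hz', dif_neg h]; exact hz₀
  rw [← himg]
  exact hTc.image hfc

/-- At an extreme point of a compact convex body, the Gauss image of any
neighborhood of the point on the boundary contains a spherical cap of
positive radius. -/
theorem extreme_point_gauss_image_contains_cap
    (X : Set (EuclideanSpace ℝ (Fin 3)))
    (hX : IsCompact X) (hconv : Convex ℝ X) (hint : (interior X).Nonempty)
    (x : EuclideanSpace ℝ (Fin 3)) (hx : x ∈ frontier X)
    (hext : x ∈ X.extremePoints ℝ)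
    (U : Set (EuclideanSpace ℝ (Fin 3))) (hU : IsOpen U) (hxU : x ∈ U) :
    ∃ (n₀ : EuclideanSpace ℝ (Fin 3)) (r : ℝ), ‖n₀‖ = 1 ∧ 0 < r ∧
      ∀ m : EuclideanSpace ℝ (Fin 3), ‖m‖ = 1 → ‖m - n₀‖ < r →
        ∃ y ∈ U ∩ frontier X, ∀ x' ∈ X, ⟪m, x'⟫ ≤ ⟪m, y⟫ := by
  have hXc : IsClosed X := hX.isClosed
  have hxX : x ∈ X := by
    have := frontier_subset_closure (s := X) hx
    rwa [hXc.closure_eq] at this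
  obtain ⟨ε, hε, hball⟩ := Metric.isOpen_iff.1 hU x hxU
  -- the key step: a unit vector whose perturbed maximizers stay in `U`
  have key : ∀ m : EuclideanSpace ℝ (Fin 3), ‖m‖ = 1 →
      (∀ z ∈ X, z ∉ Metric.ball x ε → ⟪m, z⟫ < ⟪m, x⟫) →
      ∃ y ∈ U ∩ frontier X, ∀ x' ∈ X, ⟪m, x'⟫ ≤ ⟪m, y⟫ := by
    intro m hm hless
    have hcont : Continuous fun z : EuclideanSpace ℝ (Fin 3) => ⟪m, z⟫ :=
      Continuous.inner continuous_const continuous_id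
    obtain ⟨y, hyX, hymax⟩ := hX.exists_isMaxOn ⟨x, hxX⟩ hcont.continuousOn
    have hmax : ∀ x' ∈ X, ⟪m, x'⟫ ≤ ⟪m, y⟫ := fun x' hx' => hymax hx'
    have hyb : y ∈ Metric.ball x ε := by
      by_contra hyb
      exact absurd (hmax x hxX) (not_le.2 (hless y hyX hyb))
    have hyU : y ∈ U := hball hyb
    have hyint : y ∉ interior X := by
      intro hyint
      obtain ⟨δ, hδ, hδball⟩ := Metric.isOpen_iff.1 isOpen_interior y hyint
      have hy' : y + (δ/2) • m ∈ X := by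
        apply interior_subset (hδball ?_)
        rw [Metric.mem_ball, dist_eq_norm]
        have : y + (δ/2) • m - y = (δ/2) • m := by abel
        rw [this, norm_smul, hm]
        rw [Real.norm_eq_abs, abs_of_pos (by linarith : (0:ℝ) < δ/2)]
        linarith
      have := hmax _ hy'
      rw [inner_add_right, real_inner_smul_right] at this
      have hmm : ⟪m, m⟫ = 1 := by
        rw [real_inner_self_eq_norm_sq, hm]; norm_num
      rw [hmm] at this
      linarith
    refine ⟨y, ⟨hyU, ?_⟩, hmax⟩
    rw [hXc.frontier_eq]
    exact ⟨hyX, hyint⟩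
  set S : Set (EuclideanSpace ℝ (Fin 3)) := X \ Metric.ball x ε with hS
  by_cases hSne : S.Nonempty
  · -- separate `x` from the compact convex hull of `S`
    have hScomp : IsCompact S := hX.diff Metric.isOpen_ball
    set K := convexHull ℝ S with hK
    have hKcomp : IsCompact K := aux_isCompact_convexHull hScomp
    have hKconv : Convex ℝ K := convex_convexHull ℝ S
    have hxdiff : Convex ℝ (X \ {x}) := (hconv.mem_extremePoints_iff_convex_diff.1 hext).2
    have hKsub : K ⊆ X \ {x} := by
      apply convexHull_min ?_ hxdiff
      rintro z ⟨hzX, hzb⟩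
      refine ⟨hzX, fun h => hzb ?_⟩
      rw [Set.mem_singleton_iff] at h
      rw [h]
      exact Metric.mem_ball_self hε
    have hxK : x ∉ K := fun h => (hKsub h).2 rfl
    obtain ⟨f, u, hfu, hux⟩ :=
      geometric_hahn_banach_closed_point hKconv hKcomp.isClosed hxK
    set n := (InnerProductSpace.toDual ℝ (EuclideanSpace ℝ (Fin 3))).symm f with hn
    have hinner : ∀ y, ⟪n, y⟫ = f y := fun y => InnerProductSpace.toDual_symm_apply
    obtain ⟨a₀, ha₀⟩ := hSne
    have ha₀K : a₀ ∈ K := subset_convexHull ℝ S ha₀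
    have hn0 : n ≠ 0 := by
      intro h
      have h1 : f a₀ < u := hfu a₀ ha₀K
      have h2 : (0:ℝ) = f a₀ := by rw [← hinner a₀, h, inner_zero_left]
      have h3 : (0:ℝ) = f x := by rw [← hinner x, h, inner_zero_left]
      linarith
    have hnpos : 0 < ‖n‖ := norm_pos_iff.2 hn0
    set n₀ := ‖n‖⁻¹ • n with hn₀
    have hn₀norm : ‖n₀‖ = 1 := by
      rw [hn₀, norm_smul, norm_inv, norm_norm, inv_mul_cancel₀ (ne_of_gt hnpos)]
    have hn₀inner : ∀ y, ⟪n₀, y⟫ = ‖n‖⁻¹ * f y := by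
      intro y; rw [hn₀, real_inner_smul_left, hinner]
    set c := ‖n‖⁻¹ * u with hc
    have hcx : c < ⟪n₀, x⟫ := by
      rw [hn₀inner, hc]
      exact mul_lt_mul_of_pos_left hux (inv_pos.2 hnpos)
    have hKc : ∀ z ∈ K, ⟪n₀, z⟫ < c := by
      intro z hz
      rw [hn₀inner, hc]
      exact mul_lt_mul_of_pos_left (hfu z hz) (inv_pos.2 hnpos)
    obtain ⟨R, hR⟩ := hKcomp.isBounded.exists_norm_le
    set R' := max R 0 with hR'
    have hR'0 : 0 ≤ R' := le_max_right _ _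
    have hRK : ∀ z ∈ K, ‖z‖ ≤ R' := fun z hz => (hR z hz).trans (le_max_left _ _)
    set δ := ⟪n₀, x⟫ - c with hδ
    have hδpos : 0 < δ := by rw [hδ]; linarith
    set r := δ / (R' + ‖x‖ + 1) with hr
    have hden : 0 < R' + ‖x‖ + 1 := by positivity
    have hrpos : 0 < r := div_pos hδpos hden
    refine ⟨n₀, r, hn₀norm, hrpos, ?_⟩
    intro m hm1 hmr
    apply key m hm1
    intro z hzX hzb
    have hzK : z ∈ K := subset_convexHull ℝ S ⟨hzX, hzb⟩
    have h1 : ⟪m, z⟫ ≤ ⟪n₀, z⟫ + ‖m - n₀‖ * ‖z‖ := by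
      have : ⟪m, z⟫ = ⟪n₀, z⟫ + ⟪m - n₀, z⟫ := by
        rw [inner_sub_left]; ring
      rw [this]
      have := real_inner_le_norm (m - n₀) z
      linarith
    have h2 : ⟪n₀, x⟫ - ‖m - n₀‖ * ‖x‖ ≤ ⟪m, x⟫ := by
      have heq : ⟪m, x⟫ = ⟪n₀, x⟫ + ⟪m - n₀, x⟫ := by
        rw [inner_sub_left]; ring
      have habs := abs_real_inner_le_norm (m - n₀) x
      have := neg_abs_le ⟪m - n₀, x⟫
      rw [heq]; nlinarith [abs_nonneg ⟪m - n₀, x⟫]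
    have h3 : ⟪n₀, z⟫ < c := hKc z hzK
    have h4 : ‖z‖ ≤ R' := hRK z hzK
    have h5 : ‖m - n₀‖ * (R' + ‖x‖) < δ := by
      have hmn : 0 ≤ ‖m - n₀‖ := norm_nonneg _
      have hxn : 0 ≤ ‖x‖ := norm_nonneg _
      have hrd : r * (R' + ‖x‖ + 1) = δ := div_mul_cancel₀ _ (ne_of_gt hden)
      nlinarith
    have hmn : 0 ≤ ‖m - n₀‖ := norm_nonneg _
    have hxn : 0 ≤ ‖x‖ := norm_nonneg _
    nlinarith [mul_le_mul_of_nonneg_left h4 hmn]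
  · -- `X` is contained in the ball, so every maximizer works
    rw [Set.not_nonempty_iff_eq_empty] at hSne
    refine ⟨EuclideanSpace.single (0 : Fin 3) (1:ℝ), 1, ?_, one_pos, ?_⟩
    · rw [EuclideanSpace.norm_single]; norm_num
    · intro m hm _
      apply key m hm
      intro z hzX hzb
      exact absurd (show z ∈ S from ⟨hzX, hzb⟩) (by rw [hSne]; exact Set.notMem_empty z)
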